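/- arXiv:math/0306125 — 2 statements merged into one kernel-verified Lean document; each statement's English description precedes it below -/
import Mathlib

section
/- Let D = ABC be a Dyck word, where B is a Dyck word and the words A and C have the same length. Then Ψ(ABC) = Ψ(AC)·Ψ(B) (concatenation of words). In particular, Ψ(uBd) = ud·Ψ(B) for any Dyck word B. -/
attribute [local instance] Classical.propDecidable

namespace DyckBij

/-- A word over `Bool` (`true` = up-step `u`, `false` = down-step `d`) is a Dyck word:
equally many `u`'s and `d`'s, and every prefix has at least as many `u`'s as `d`'s. -/
def IsDyck (w : List Bool) : Prop :=
  w.count false = w.count true ∧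
    ∀ p : List Bool, p <+: w → p.count false ≤ p.count true

/-- `Matched w i j`: the `u` at (0-indexed) position `i` of `w` is matched (as in matched
parentheses) with the `d` at position `j`, i.e. `w = A u B d C` with `B` a Dyck word,
`|A| = i` and `j = i + |B| + 1`. -/
def Matched (w : List Bool) (i j : ℕ) : Prop :=
  ∃ A B C : List Bool, IsDyck B ∧ w = A ++ true :: (B ++ false :: C) ∧
    A.length = i ∧ j = i + B.length + 1

/-- Positions `i` and `j` form a matched pair of steps of `w`. -/
def MatchPair (w : List Bool) (i j : ℕ) : Prop :=
  Matched w i j ∨ Matched w j i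

/-- The 0-indexed reading order `σ^{(r)}` on a word of length `L`: the first `2r` positions
are read in order, and the remaining positions are read in zigzag
`2r, L-1, 2r+1, L-2, …` (0-indexed). For `r = 0` this is the zigzag order `σ`. -/
def zigR (r L p : ℕ) : ℕ :=
  if p < 2 * r then p
  else if p % 2 = 0 then p / 2 + r
  else L + r - (p + 1) / 2

/-- The bijection `Ψ_r`: the `p`-th letter of `Ψ_r(w)` is `u` iff the match of the
`σ^{(r)}_p`-th step of `w` does not occur among the previously read steps
`σ^{(r)}_0, …, σ^{(r)}_{p-1}`. -/
noncomputable def psiR (r : ℕ) (w : List Bool) : List Bool :=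
  List.ofFn fun p : Fin w.length =>
    if ∃ p' : ℕ, p' < (p : ℕ) ∧
        MatchPair w (zigR r w.length p') (zigR r w.length (p : ℕ))
    then false else true

/-- The bijection `Ψ = Ψ_0`. -/
noncomputable def psi : List Bool → List Bool := psiR 0

/-- Number of tunnels of `w` with `|A| = |C| + 2r` (midpoint at `x = n + r`),
i.e. decompositions `w = A u B d C` with `B` a Dyck word; tunnels are indexed by `|A|`. -/
noncomputable def tunEq (r : ℕ) (w : List Bool) : ℕ :=
  {i : ℕ | ∃ A B C : List Bool, IsDyck B ∧ w = A ++ true :: (B ++ false :: C) ∧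
    A.length = i ∧ A.length = C.length + 2 * r}.ncard

/-- Number of tunnels of `w` with `|A| > |C| + 2r` (midpoint in `x > n + r`). -/
noncomputable def tunGt (r : ℕ) (w : List Bool) : ℕ :=
  {i : ℕ | ∃ A B C : List Bool, IsDyck B ∧ w = A ++ true :: (B ++ false :: C) ∧
    A.length = i ∧ C.length + 2 * r < A.length}.ncard

/-- Number of tunnels of `w` with `|A| ≤ |C| + 2r` (midpoint in `x ≤ n + r`). -/
noncomputable def tunLe (r : ℕ) (w : List Bool) : ℕ :=
  {i : ℕ | ∃ A B C : List Bool, IsDyck B ∧ w = A ++ true :: (B ++ false :: C) ∧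
    A.length = i ∧ A.length ≤ C.length + 2 * r}.ncard

/-- Number of centered tunnels `ct(w)`. -/
noncomputable def ctun (w : List Bool) : ℕ := tunEq 0 w

/-- Number of right tunnels `rt(w)`. -/
noncomputable def rtun (w : List Bool) : ℕ := tunGt 0 w

/-- Number of left tunnels `lt(w)`: tunnels with `|A| < |C|`. -/
noncomputable def ltun (w : List Bool) : ℕ :=
  {i : ℕ | ∃ A B C : List Bool, IsDyck B ∧ w = A ++ true :: (B ++ false :: C) ∧
    A.length = i ∧ A.length < C.length}.ncard

/-- Number of multitunnels of `w` with `|A| = |C| + 2r` (midpoint at `x = n + r`):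
decompositions `w = A B C` with `B` a nonempty Dyck word, indexed by `(|A|, |B|)`. -/
noncomputable def mtunEq (r : ℕ) (w : List Bool) : ℕ :=
  {q : ℕ × ℕ | ∃ A B C : List Bool, IsDyck B ∧ B ≠ [] ∧ w = A ++ B ++ C ∧
    A.length = q.1 ∧ B.length = q.2 ∧ A.length = C.length + 2 * r}.ncard

/-- Number of centered multitunnels `cmt(w)`. -/
noncomputable def cmtun (w : List Bool) : ℕ := mtunEq 0 w

/-- Number of hills `h(w)`: decompositions `w = X u d Y` with `X, Y` Dyck words. -/
noncomputable def numHills (w : List Bool) : ℕ :=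
  {i : ℕ | ∃ X Y : List Bool, IsDyck X ∧ IsDyck Y ∧
    w = X ++ true :: false :: Y ∧ X.length = i}.ncard

/-- Number of hills of `w` lying in `x > 2r`, i.e. with `|X| ≥ 2r`. -/
noncomputable def numHillsAfter (r : ℕ) (w : List Bool) : ℕ :=
  {i : ℕ | ∃ X Y : List Bool, IsDyck X ∧ IsDyck Y ∧
    w = X ++ true :: false :: Y ∧ X.length = i ∧ 2 * r ≤ X.length}.ncard

/-- Number of arches (equivalently, returns) `ret(w)`: decompositions
`w = X (u B d) Y` with `X, B, Y` Dyck words. -/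
noncomputable def numArches (w : List Bool) : ℕ :=
  {i : ℕ | ∃ X B Y : List Bool, IsDyck X ∧ IsDyck B ∧ IsDyck Y ∧
    w = X ++ true :: (B ++ false :: Y) ∧ X.length = i}.ncard

/-- Number of arches of `w` lying in `x ≥ 2r`, i.e. with `|X| ≥ 2r`. -/
noncomputable def numArchesAfter (r : ℕ) (w : List Bool) : ℕ :=
  {i : ℕ | ∃ X B Y : List Bool, IsDyck X ∧ IsDyck B ∧ IsDyck Y ∧
    w = X ++ true :: (B ++ false :: Y) ∧ X.length = i ∧ 2 * r ≤ X.length}.ncard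

/-- Number of odd rises `odr(w)`: `u`-steps at odd 1-indexed positions
(even 0-indexed positions). -/
noncomputable def oddRises (w : List Bool) : ℕ :=
  {p : ℕ | p < w.length ∧ p % 2 = 0 ∧ w.getD p false = true}.ncard

/-- Number of even rises `er(w)`: `u`-steps at even 1-indexed positions
(odd 0-indexed positions). -/
noncomputable def evenRises (w : List Bool) : ℕ :=
  {p : ℕ | p < w.length ∧ p % 2 = 1 ∧ w.getD p false = true}.ncard

/-- Number of odd rises of `w` at 1-indexed positions `> 2r`. -/
noncomputable def oddRisesAfter (r : ℕ) (w : List Bool) : ℕ :=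
  {p : ℕ | p < w.length ∧ p % 2 = 0 ∧ 2 * r ≤ p ∧ w.getD p false = true}.ncard

/-- Number of even rises of `w` at 1-indexed positions `> 2r`. -/
noncomputable def evenRisesAfter (r : ℕ) (w : List Bool) : ℕ :=
  {p : ℕ | p < w.length ∧ p % 2 = 1 ∧ 2 * r ≤ p ∧ w.getD p false = true}.ncard

/-- Number of `u`-steps of `w` at 1-indexed positions `≤ 2r`. -/
noncomputable def upstepsBefore (r : ℕ) (w : List Bool) : ℕ :=
  {p : ℕ | p < w.length ∧ p < 2 * r ∧ w.getD p false = true}.ncard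

/-- Number of peaks of `w`: occurrences of the factor `u d`. -/
noncomputable def numPeaks (w : List Bool) : ℕ :=
  {i : ℕ | i + 2 ≤ w.length ∧ w.getD i false = true ∧ w.getD (i + 1) true = false}.ncard

/-- Number of occurrences in `w` of a factor of length 3 beginning with `u`
and ending with `d` (occurrences of `u⋆d`). -/
noncomputable def numUStarD (w : List Bool) : ℕ :=
  {i : ℕ | i + 3 ≤ w.length ∧ w.getD i false = true ∧ w.getD (i + 2) true = false}.ncard

/-- `ih(w)`: 1 if `w` begins with the factor `u d`, else 0. -/
noncomputable def initHill (w : List Bool) : ℕ :=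
  if w.take 2 = [true, false] then 1 else 0

/-- `fh(w)`: 1 if `w = X u d` with `X` a Dyck word, else 0. -/
noncomputable def finHill (w : List Bool) : ℕ :=
  if ∃ X : List Bool, IsDyck X ∧ w = X ++ [true, false] then 1 else 0

/-- `π` avoids the pattern 321. -/
def Avoids321 {n : ℕ} (π : Equiv.Perm (Fin n)) : Prop :=
  ¬ ∃ i j k : Fin n, i < j ∧ j < k ∧ π k < π j ∧ π j < π i

/-- `π` avoids the pattern 132. -/
def Avoids132 {n : ℕ} (π : Equiv.Perm (Fin n)) : Prop :=
  ¬ ∃ i j k : Fin n, i < j ∧ j < k ∧ π i < π k ∧ π k < π j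

/-- Number of fixed points of `π`. -/
noncomputable def fixedPts {n : ℕ} (π : Equiv.Perm (Fin n)) : ℕ :=
  {i : Fin n | π i = i}.ncard

/-- Number of excedances of `π`. -/
noncomputable def excedances {n : ℕ} (π : Equiv.Perm (Fin n)) : ℕ :=
  {i : Fin n | i < π i}.ncard

/-- Number of descents of `π`. -/
noncomputable def descents {n : ℕ} (π : Equiv.Perm (Fin n)) : ℕ :=
  {i : ℕ | ∃ (h1 : i < n) (h2 : i + 1 < n), π ⟨i + 1, h2⟩ < π ⟨i, h1⟩}.ncard

/-- `α_r(π) = #{i : π(i) = i + r}` (stated 0-indexed, equivalent to the 1-indexed version). -/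
noncomputable def alphaStat {n : ℕ} (r : ℕ) (π : Equiv.Perm (Fin n)) : ℕ :=
  {i : Fin n | (π i : ℕ) = (i : ℕ) + r}.ncard

/-- `β_r(π) = #{i : i > r, π(i) = i}` (for 1-indexed `i`; 0-indexed this is `r ≤ i`). -/
noncomputable def betaStat {n : ℕ} (r : ℕ) (π : Equiv.Perm (Fin n)) : ℕ :=
  {i : Fin n | r ≤ (i : ℕ) ∧ π i = i}.ncard


/-! ### Auxiliary lemmas -/

private lemma splitEq {α : Type*} {X Y X' Y' : List α} (h : X ++ Y = X' ++ Y')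
    (hl : X.length ≤ X'.length) : ∃ Z, X' = X ++ Z ∧ Y = Z ++ Y' := by
  rcases List.append_eq_append_iff.mp h with ⟨a, ha1, ha2⟩ | ⟨c, hc1, hc2⟩
  · exact ⟨a, ha1, ha2⟩
  · have hc : c = [] := by
      have hlen := congrArg List.length hc1
      rw [List.length_append] at hlen
      have : c.length = 0 := by omega
      simpa using this
    subst hc
    simp only [List.append_nil] at hc1 hc2
    exact ⟨[], by simp [hc1], by simp [hc2]⟩

private lemma count_take_le {w : List Bool} (hw : IsDyck w) (n : ℕ) :
    (w.take n).count false ≤ (w.take n).count true :=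
  hw.2 _ (List.take_prefix n w)

private lemma isDyck_of_take (w : List Bool) (h1 : w.count false = w.count true)
    (h2 : ∀ n, (w.take n).count false ≤ (w.take n).count true) : IsDyck w := by
  refine ⟨h1, fun p hp => ?_⟩
  obtain ⟨t, rfl⟩ := hp
  have := h2 p.length
  rwa [List.take_left] at this

private lemma count_take_pair (X Y : List Bool) (n : ℕ) (b : Bool) :
    ((X ++ Y).take n).count b = (X.take n).count b + (Y.take (n - X.length)).count b := by
  rw [List.take_append, List.count_append]

private lemma count_take_triple (X B Y : List Bool) (n : ℕ) (b : Bool) :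
    ((X ++ B ++ Y).take n).count b
      = (X.take n).count b + (B.take (n - X.length)).count b
        + (Y.take (n - X.length - B.length)).count b := by
  rw [count_take_pair, count_take_pair, List.length_append, Nat.sub_sub]

private lemma cross1 {B P Q S : List Bool} (hB : IsDyck B) (hB' : IsDyck (S ++ P))
    (h : B = P ++ false :: Q) : False := by
  have h2 : (P ++ [false]).count false ≤ (P ++ [false]).count true :=
    hB.2 _ ⟨Q, by rw [h]; simp⟩
  have h3 := hB'.1
  have h4 : S.count false ≤ S.count true := hB'.2 S ⟨P, rfl⟩
  simp [List.count_append] at h2 h3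
  omega

private lemma cross2 {B P Q S : List Bool} (hB : IsDyck B) (hB' : IsDyck (Q ++ S))
    (h : B = P ++ true :: Q) : False := by
  have h1 : P.count false ≤ P.count true := hB.2 P ⟨true :: Q, h.symm⟩
  have h2 := hB.1
  have h4 : Q.count false ≤ Q.count true := hB'.2 Q ⟨S, rfl⟩
  rw [h] at h2
  simp [List.count_append] at h2
  omega

private lemma dyck_mid {B : List Bool} (hB : IsDyck B) (X Y : List Bool) :
    IsDyck (X ++ B ++ Y) ↔ IsDyck (X ++ Y) := by
  have hbc := hB.1
  constructor
  · intro h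
    refine isDyck_of_take _ ?_ ?_
    · have := h.1; simp [List.count_append] at this ⊢; omega
    · intro n
      rcases le_or_gt n X.length with hn | hn
      · have e0 : n - X.length = 0 := by omega
        have := count_take_le h n
        rw [count_take_triple, count_take_triple, e0] at this
        rw [count_take_pair, count_take_pair, e0]
        simp at this ⊢
        omega
      · have := count_take_le h (n + B.length)
        rw [count_take_triple, count_take_triple] at this
        have e1 : X.take (n + B.length) = X := List.take_of_length_le (by omega)
        have e2 : X.take n = X := List.take_of_length_le (by omega)
        have e3 : B.take (n + B.length - X.length) = B := List.take_of_length_le (by omega)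
        have e4 : n + B.length - X.length - B.length = n - X.length := by omega
        rw [e1, e3, e4] at this
        rw [count_take_pair, count_take_pair, e2]
        omega
  · intro h
    refine isDyck_of_take _ ?_ ?_
    · have := h.1; simp [List.count_append] at this ⊢; omega
    · intro n
      rw [count_take_triple, count_take_triple]
      by_cases h1 : n ≤ X.length
      · have e0 : n - X.length = 0 := by omega
        have := count_take_le h n
        rw [count_take_pair, count_take_pair, e0] at this
        rw [e0]
        simp at this ⊢
        omega
      · by_cases h2 : n ≤ X.length + B.length
        · have e2 : X.take n = X := List.take_of_length_le (by omega)
          have e4 : n - X.length - B.length = 0 := by omega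
          have hX := count_take_le h X.length
          rw [count_take_pair, count_take_pair, List.take_length, Nat.sub_self] at hX
          have hb := count_take_le hB (n - X.length)
          rw [e2, e4]
          simp at hX ⊢
          omega
        · have e2 : X.take n = X := List.take_of_length_le (by omega)
          have e3 : B.take (n - X.length) = B := List.take_of_length_le (by omega)
          have := count_take_le h (X.length + (n - X.length - B.length))
          rw [count_take_pair, count_take_pair,
            List.take_of_length_le (Nat.le_add_right _ _), Nat.add_sub_cancel_left] at this
          rw [e2, e3]
          omega


private lemma matched_inner {A B C : List Bool} {x y : ℕ} (hy : y < B.length) :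
    Matched (A ++ B ++ C) (A.length + x) (A.length + y) ↔ Matched B x y := by
  constructor
  · rintro ⟨A', B', C', hD, hw, hlen, hj⟩
    have hw' : A ++ (B ++ C) = A' ++ (true :: (B' ++ false :: C')) := by
      simpa [List.append_assoc] using hw
    obtain ⟨Z, hZ1, hZ2⟩ := splitEq hw' (by omega)
    have hZlen : Z.length = x := by
      have := congrArg List.length hZ1; simp at this; omega
    have hw'' : (Z ++ true :: (B' ++ [false])) ++ C' = B ++ C := by
      rw [hZ2]; simp
    obtain ⟨Z₂, hB1, hC1⟩ := splitEq hw'' (by simp; omega)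
    exact ⟨Z, B', Z₂, hD, by rw [hB1]; simp, hZlen, by omega⟩
  · rintro ⟨X, B', Y, hD, hBeq, hlen, hj⟩
    refine ⟨A ++ X, B', Y ++ C, hD, ?_, by simp [hlen], by omega⟩
    rw [hBeq]; simp

private lemma matched_proj {A B C : List Bool} (hB : IsDyck B) {i j : ℕ}
    (h : Matched (A ++ B ++ C) i j)
    (hi : i < A.length ∨ A.length + B.length ≤ i)
    (hj : j < A.length ∨ A.length + B.length ≤ j) :
    Matched (A ++ C) (if i < A.length then i else i - B.length)
      (if j < A.length then j else j - B.length) := by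
  obtain ⟨A', B', C', hD, hw, hlen, hj'⟩ := h
  have hw' : A' ++ (true :: (B' ++ false :: C')) = A ++ (B ++ C) := by
    rw [← hw]; simp
  rcases hi with hi | hi
  · obtain ⟨Z, hZ1, hZ2⟩ := splitEq hw' (by omega)
    have hZlen : Z.length = A.length - i := by
      have := congrArg List.length hZ1; simp at this; omega
    obtain ⟨z, Z₁, rfl⟩ : ∃ z Z₁, Z = z :: Z₁ := by
      cases Z with
      | nil => simp at hZlen; omega
      | cons z Z₁ => exact ⟨z, Z₁, rfl⟩
    simp only [List.length_cons] at hZlen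
    obtain ⟨rfl, hZ₁⟩ : z = true ∧ B' ++ false :: C' = Z₁ ++ (B ++ C) := by
      rw [List.cons_append] at hZ2
      exact ⟨(List.cons.injEq _ _ _ _ ▸ hZ2).1.symm, by
        have := (List.cons.injEq _ _ _ _ ▸ hZ2).2; simpa using this⟩
    rcases hj with hj | hj
    · have hsl : B'.length ≤ Z₁.length := by omega
      obtain ⟨S, hS1, hS2⟩ := splitEq
        (show B' ++ (false :: C') = Z₁ ++ (B ++ C) by simpa using hZ₁) hsl
      have hSlen : S.length = Z₁.length - B'.length := by
        have := congrArg List.length hS1; simp at this; omega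
      obtain ⟨s, S₁, rfl⟩ : ∃ s S₁, S = s :: S₁ := by
        cases S with
        | nil => simp at hSlen; omega
        | cons s S₁ => exact ⟨s, S₁, rfl⟩
      obtain ⟨rfl, hC'⟩ : s = false ∧ C' = S₁ ++ (B ++ C) := by
        rw [List.cons_append] at hS2
        exact ⟨(List.cons.injEq _ _ _ _ ▸ hS2).1.symm, (List.cons.injEq _ _ _ _ ▸ hS2).2⟩
      rw [if_pos hi, if_pos hj]
      exact ⟨A', B', S₁ ++ C, hD, by rw [hZ1, hS1]; simp, hlen, hj'⟩
    · have hsl : Z₁.length ≤ B'.length := by omega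
      obtain ⟨S, hS1, hS2⟩ := splitEq
        (show Z₁ ++ (B ++ C) = B' ++ (false :: C') by simpa using hZ₁.symm) hsl
      have hSlen : S.length = B'.length - Z₁.length := by
        have := congrArg List.length hS1; simp at this; omega
      have hbl : B.length ≤ S.length := by omega
      obtain ⟨S₂, hS₂1, hS₂2⟩ := splitEq hS2 hbl
      have hS₂len : S₂.length = S.length - B.length := by
        have := congrArg List.length hS₂1; simp at this; omega
      have hD' : IsDyck (Z₁ ++ S₂) := by
        have hD2 : IsDyck (Z₁ ++ B ++ S₂) := by
          rw [hS₂1] at hS1; rw [hS1] at hD; simpa [List.append_assoc] using hD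
        exact (dyck_mid hB _ _).mp hD2
      rw [if_pos hi, if_neg (by omega)]
      refine ⟨A', Z₁ ++ S₂, C', hD', ?_, hlen, ?_⟩
      · rw [hZ1, hS₂2]; simp
      · simp only [List.length_append]; omega
  · have hw'' : (A ++ B) ++ C = A' ++ (true :: (B' ++ false :: C')) := hw
    obtain ⟨Z, hZ1, hZ2⟩ := splitEq hw'' (by simp; omega)
    have hZlen : Z.length = i - A.length - B.length := by
      have := congrArg List.length hZ1; simp at this; omega
    rw [if_neg (by omega), if_neg (by omega)]
    refine ⟨A ++ Z, B', C', hD, by rw [hZ2]; simp, by simp; omega, by omega⟩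

private lemma matched_cross {A B C : List Bool} (hB : IsDyck B) {i j : ℕ}
    (h : Matched (A ++ B ++ C) i j)
    (hi : i < A.length ∨ A.length + B.length ≤ i)
    (hj1 : A.length ≤ j) (hj2 : j < A.length + B.length) : False := by
  obtain ⟨A', B', C', hD, hw, hlen, hj'⟩ := h
  have hw' : A' ++ (true :: (B' ++ false :: C')) = A ++ (B ++ C) := by
    rw [← hw]; simp
  rcases hi with hi | hi
  · obtain ⟨Z, hZ1, hZ2⟩ := splitEq hw' (by omega)
    have hZlen : Z.length = A.length - i := by
      have := congrArg List.length hZ1; simp at this; omega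
    obtain ⟨z, Z₁, rfl⟩ : ∃ z Z₁, Z = z :: Z₁ := by
      cases Z with
      | nil => simp at hZlen; omega
      | cons z Z₁ => exact ⟨z, Z₁, rfl⟩
    simp only [List.length_cons] at hZlen
    obtain ⟨rfl, hZ₁⟩ : z = true ∧ B' ++ false :: C' = Z₁ ++ (B ++ C) := by
      rw [List.cons_append] at hZ2
      exact ⟨(List.cons.injEq _ _ _ _ ▸ hZ2).1.symm, by
        have := (List.cons.injEq _ _ _ _ ▸ hZ2).2; simpa using this⟩
    have hsl : Z₁.length ≤ B'.length := by omega
    obtain ⟨S, hS1, hS2⟩ := splitEq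
      (show Z₁ ++ (B ++ C) = B' ++ (false :: C') by simpa using hZ₁.symm) hsl
    have hSlen : S.length = B'.length - Z₁.length := by
      have := congrArg List.length hS1; simp at this; omega
    have hw3 : (S ++ [false]) ++ C' = B ++ C := by rw [hS2]; simp
    obtain ⟨Q, hQ1, hQ2⟩ := splitEq hw3 (by simp; omega)
    exact cross1 (P := S) (Q := Q) hB (show IsDyck (Z₁ ++ S) from hS1 ▸ hD)
      (by rw [hQ1]; simp)
  · omega

private lemma matched_cross' {A B C : List Bool} (hB : IsDyck B) {i j : ℕ}
    (h : Matched (A ++ B ++ C) i j)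
    (hi1 : A.length ≤ i) (hi2 : i < A.length + B.length)
    (hj : j < A.length ∨ A.length + B.length ≤ j) : False := by
  obtain ⟨A', B', C', hD, hw, hlen, hj'⟩ := h
  have hw' : A ++ (B ++ C) = A' ++ (true :: (B' ++ false :: C')) := by
    simpa using hw
  obtain ⟨Z, hZ1, hZ2⟩ := splitEq hw' (by omega)
  have hZlen : Z.length = i - A.length := by
    have := congrArg List.length hZ1; simp at this; omega
  have hw'' : (Z ++ [true]) ++ (B' ++ false :: C') = B ++ C := by
    rw [hZ2]; simp
  obtain ⟨Q, hQ1, hQ2⟩ := splitEq hw'' (by simp; omega)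
  have hQlen : Q.length = B.length - Z.length - 1 := by
    have := congrArg List.length hQ1; simp at this; omega
  have hj3 : A.length + B.length ≤ j := by rcases hj with hj | hj <;> omega
  have hql : Q.length ≤ B'.length := by omega
  obtain ⟨S, hS1, hS2⟩ := splitEq hQ2.symm hql
  exact cross2 (P := Z) hB (show IsDyck (Q ++ S) from hS1 ▸ hD) (by rw [hQ1]; simp)

private lemma matched_lift1 {A C : List Bool} (B : List Bool) {i j : ℕ}
    (h : Matched (A ++ C) i j) (hj : j < A.length) : Matched (A ++ B ++ C) i j := by
  obtain ⟨A', B', C', hD, hw, hlen, hj'⟩ := h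
  have hw' : (A' ++ true :: (B' ++ [false])) ++ C' = A ++ C := by rw [hw]; simp
  obtain ⟨Z, hZ1, hZ2⟩ := splitEq hw' (by simp; omega)
  exact ⟨A', B', Z ++ (B ++ C), hD, by rw [hZ1]; simp, hlen, hj'⟩

private lemma matched_lift2 {A C B : List Bool} (hB : IsDyck B) {i j : ℕ}
    (h : Matched (A ++ C) i j) (hi : i < A.length) (hj : A.length ≤ j) :
    Matched (A ++ B ++ C) i (j + B.length) := by
  obtain ⟨A', B', C', hD, hw, hlen, hj'⟩ := h
  obtain ⟨Z, hZ1, hZ2⟩ := splitEq hw.symm (by omega)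
  have hZlen : Z.length = A.length - i := by
    have := congrArg List.length hZ1; simp at this; omega
  obtain ⟨z, Z₁, rfl⟩ : ∃ z Z₁, Z = z :: Z₁ := by
    cases Z with
    | nil => simp at hZlen; omega
    | cons z Z₁ => exact ⟨z, Z₁, rfl⟩
  simp only [List.length_cons] at hZlen
  obtain ⟨rfl, hZ₁⟩ : z = true ∧ B' ++ false :: C' = Z₁ ++ C := by
    rw [List.cons_append] at hZ2
    exact ⟨(List.cons.injEq _ _ _ _ ▸ hZ2).1.symm, (List.cons.injEq _ _ _ _ ▸ hZ2).2⟩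
  have hsl : Z₁.length ≤ B'.length := by omega
  obtain ⟨S, hS1, hS2⟩ := splitEq
    (show Z₁ ++ C = B' ++ (false :: C') by simpa using hZ₁.symm) hsl
  have hSlen : S.length = B'.length - Z₁.length := by
    have := congrArg List.length hS1; simp at this; omega
  have hD' : IsDyck (Z₁ ++ (B ++ S)) := by
    have := (dyck_mid hB Z₁ S).mpr (hS1 ▸ hD)
    simpa [List.append_assoc] using this
  refine ⟨A', Z₁ ++ (B ++ S), C', hD', ?_, hlen, ?_⟩
  · rw [hZ1, hS2]; simp
  · simp only [List.length_append]; omega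

private lemma matched_lift3 {A C : List Bool} (B : List Bool) {i j : ℕ}
    (h : Matched (A ++ C) i j) (hi : A.length ≤ i) :
    Matched (A ++ B ++ C) (i + B.length) (j + B.length) := by
  obtain ⟨A', B', C', hD, hw, hlen, hj'⟩ := h
  obtain ⟨Z, hZ1, hZ2⟩ := splitEq hw (by omega)
  have hZlen : Z.length = i - A.length := by
    have := congrArg List.length hZ1; simp at this; omega
  refine ⟨A ++ B ++ Z, B', C', hD, by rw [hZ2]; simp, by simp; omega, by omega⟩


private lemma matched_lt {w : List Bool} {i j : ℕ} (h : Matched w i j) : i < j := by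
  obtain ⟨_, _, _, _, _, _, h⟩ := h; omega

private lemma matchPair_inner {A B C : List Bool} {x y : ℕ}
    (hx : x < B.length) (hy : y < B.length) :
    MatchPair (A ++ B ++ C) (A.length + x) (A.length + y) ↔ MatchPair B x y :=
  or_congr (matched_inner hy) (matched_inner hx)

private lemma matchPair_cross {A B C : List Bool} (hB : IsDyck B) {i j : ℕ}
    (hi : i < A.length ∨ A.length + B.length ≤ i)
    (hj1 : A.length ≤ j) (hj2 : j < A.length + B.length) :
    ¬ MatchPair (A ++ B ++ C) i j := by
  rintro (h | h)
  · exact matched_cross hB h hi hj1 hj2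
  · exact matched_cross' hB h hj1 hj2 hi

private lemma matchPair_outer {A B C : List Bool} (hB : IsDyck B) {i j : ℕ}
    (hi : i < A.length ∨ A.length + B.length ≤ i)
    (hj : j < A.length ∨ A.length + B.length ≤ j) :
    MatchPair (A ++ B ++ C) i j ↔
      MatchPair (A ++ C) (if i < A.length then i else i - B.length)
        (if j < A.length then j else j - B.length) := by
  constructor
  · rintro (h | h)
    · exact Or.inl (matched_proj hB h hi hj)
    · exact Or.inr (matched_proj hB h hj hi)
  · intro h
    rcases hi with hi | hi <;> rcases hj with hj | hj
    · rw [if_pos hi, if_pos hj] at h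
      rcases h with h | h
      · exact Or.inl (matched_lift1 B h hj)
      · exact Or.inr (matched_lift1 B h hi)
    · rw [if_pos hi, if_neg (by omega)] at h
      rcases h with h | h
      · have := matched_lift2 hB h hi (by have := matched_lt h; omega)
        rw [Nat.sub_add_cancel (by omega)] at this
        exact Or.inl this
      · exact absurd (matched_lt h) (by omega)
    · rw [if_neg (by omega), if_pos hj] at h
      rcases h with h | h
      · exact absurd (matched_lt h) (by omega)
      · have := matched_lift2 hB h hj (by have := matched_lt h; omega)
        rw [Nat.sub_add_cancel (by omega)] at this
        exact Or.inr this
    · rw [if_neg (by omega), if_neg (by omega)] at h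
      rcases h with h | h
      · have := matched_lift3 B h (by omega)
        rw [Nat.sub_add_cancel (by omega), Nat.sub_add_cancel (by omega)] at this
        exact Or.inl this
      · have := matched_lift3 B h (by omega)
        rw [Nat.sub_add_cancel (by omega), Nat.sub_add_cancel (by omega)] at this
        exact Or.inr this

private lemma zig0 (L q : ℕ) :
    zigR 0 L q = if q % 2 = 0 then q / 2 else L - (q + 1) / 2 := by
  simp [zigR]

private lemma zig_outer (a b q : ℕ) (hq : q < 2 * a) :
    (zigR 0 (2 * a + b) q < a ∧ zigR 0 (2 * a) q = zigR 0 (2 * a + b) q)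
      ∨ (a + b ≤ zigR 0 (2 * a + b) q ∧
          zigR 0 (2 * a) q = zigR 0 (2 * a + b) q - b) := by
  rw [zig0, zig0]
  by_cases h : q % 2 = 0 <;> simp [h] <;> omega

private lemma zig_inner (a b q : ℕ) (hq : q < b) :
    zigR 0 (2 * a + b) (2 * a + q) = a + zigR 0 b q ∧ zigR 0 b q < b := by
  have hm : (2 * a + q) % 2 = q % 2 := by omega
  rw [zig0, zig0, hm]
  by_cases h : q % 2 = 0 <;> simp [h] <;> omega

private lemma psi_length (w : List Bool) : (psi w).length = w.length := by
  simp [psi, psiR]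

private lemma psi_getElem (w : List Bool) (p : ℕ) (hp : p < (psi w).length) :
    (psi w)[p] =
      if ∃ p' : ℕ, p' < p ∧ MatchPair w (zigR 0 w.length p') (zigR 0 w.length p)
      then false else true := by
  have hp' : p < w.length := by rwa [psi_length] at hp
  simp [psi, psiR]

private lemma isDyck_nil : IsDyck ([] : List Bool) := by
  refine ⟨rfl, fun p hp => ?_⟩
  obtain ⟨t, ht⟩ := hp
  have : p = [] := by
    have := congrArg List.length ht; simp at this; tauto
  simp [this]

private lemma psi_two : psi [true, false] = [true, false] := by
  have hlen : (psi [true, false]).length = 2 := by rw [psi_length]; rfl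
  apply List.ext_getElem (by rw [hlen]; rfl)
  intro p hp hp'
  have hp2 : p < 2 := by omega
  interval_cases p
  · rw [psi_getElem _ 0 hp, if_neg (by rintro ⟨p', h, _⟩; omega)]
    rfl
  · rw [psi_getElem _ 1 hp, if_pos ?_]
    · rfl
    refine ⟨0, by omega, ?_⟩
    have hz0 : zigR 0 ([true, false] : List Bool).length 0 = 0 := by simp [zigR]
    have hz1 : zigR 0 ([true, false] : List Bool).length 1 = 1 := by
      simp [zigR]
    rw [hz0, hz1]
    exact Or.inl ⟨[], [], [], isDyck_nil, rfl, rfl, rfl⟩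


private lemma psi_append_main (A B C : List Bool) (hB : IsDyck B)
    (hAC : A.length = C.length) :
    psi (A ++ B ++ C) = psi (A ++ C) ++ psi B := by
  have hlenw : (A ++ B ++ C).length = 2 * A.length + B.length := by
    simp [List.length_append]; omega
  have hlenv : (A ++ C).length = 2 * A.length := by
    simp [List.length_append]; omega
  have outer_iff : ∀ x y : ℕ, x < 2 * A.length → y < 2 * A.length →
      (MatchPair (A ++ B ++ C) (zigR 0 (2 * A.length + B.length) x)
          (zigR 0 (2 * A.length + B.length) y) ↔
        MatchPair (A ++ C) (zigR 0 (2 * A.length) x) (zigR 0 (2 * A.length) y)) := by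
    intro x y hx hy
    have h1 := zig_outer A.length B.length x hx
    have h2 := zig_outer A.length B.length y hy
    rw [matchPair_outer hB
      (by rcases h1 with ⟨h, _⟩ | ⟨h, _⟩; exacts [Or.inl h, Or.inr h])
      (by rcases h2 with ⟨h, _⟩ | ⟨h, _⟩; exacts [Or.inl h, Or.inr h])]
    rcases h1 with ⟨h1a, h1b⟩ | ⟨h1a, h1b⟩ <;> rcases h2 with ⟨h2a, h2b⟩ | ⟨h2a, h2b⟩
    · rw [if_pos h1a, if_pos h2a, ← h1b, ← h2b]
    · rw [if_pos h1a, if_neg (by omega), ← h1b, ← h2b]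
    · rw [if_neg (by omega), if_pos h2a, ← h1b, ← h2b]
    · rw [if_neg (by omega), if_neg (by omega), ← h1b, ← h2b]
  apply List.ext_getElem (by simp [psi_length, List.length_append]; omega)
  intro p hp1 hp2
  have hp : p < 2 * A.length + B.length := by
    rw [psi_length, hlenw] at hp1; exact hp1
  rw [psi_getElem _ p hp1, hlenw]
  by_cases hpa : p < 2 * A.length
  · rw [List.getElem_append_left (by rw [psi_length, hlenv]; exact hpa)]
    rw [psi_getElem _ p (by rw [psi_length, hlenv]; exact hpa), hlenv]
    refine if_congr ?_ rfl rfl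
    exact exists_congr fun p' =>
      and_congr_right fun hlt => outer_iff p' p (by omega) hpa
  · rw [List.getElem_append_right (by rw [psi_length, hlenv]; omega)]
    rw [psi_getElem _ (p - (psi (A ++ C)).length)
      (by rw [psi_length, psi_length, hlenv] at *; omega)]
    rw [psi_length, hlenv]
    have hq : p - 2 * A.length < B.length := by omega
    have hz := zig_inner A.length B.length (p - 2 * A.length) hq
    have ep : 2 * A.length + (p - 2 * A.length) = p := by omega
    rw [ep] at hz
    refine if_congr ?_ rfl rfl
    constructor
    · rintro ⟨p', hlt, hm⟩
      by_cases hp' : p' < 2 * A.length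
      · exfalso
        have h1 := zig_outer A.length B.length p' hp'
        have hm' := hm
        rw [hz.1] at hm'
        exact matchPair_cross hB
          (by rcases h1 with ⟨h, _⟩ | ⟨h, _⟩; exacts [Or.inl h, Or.inr h])
          (by omega) (by omega) hm'
      · have hq' : p' - 2 * A.length < B.length := by omega
        have hz' := zig_inner A.length B.length (p' - 2 * A.length) hq'
        have ep' : 2 * A.length + (p' - 2 * A.length) = p' := by omega
        rw [ep'] at hz'
        refine ⟨p' - 2 * A.length, by omega, ?_⟩
        have hm' := hm
        rw [hz'.1, hz.1] at hm'
        exact (matchPair_inner hz'.2 hz.2).mp hm'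
    · rintro ⟨q', hlt, hm⟩
      have hq' : q' < B.length := by omega
      have hz' := zig_inner A.length B.length q' hq'
      refine ⟨2 * A.length + q', by omega, ?_⟩
      rw [hz'.1, hz.1]
      exact (matchPair_inner hz'.2 hz.2).mpr hm

/-- if `D = ABC` is a Dyck word with `B` a Dyck word and `|A| = |C|`,
then `Ψ(ABC) = Ψ(AC)·Ψ(B)`; in particular `Ψ(uBd) = ud·Ψ(B)` for any Dyck word `B`. -/
theorem psi_append (A B C : List Bool) (hABC : IsDyck (A ++ B ++ C)) (hB : IsDyck B)
    (hAC : A.length = C.length) :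
    psi (A ++ B ++ C) = psi (A ++ C) ++ psi B ∧
      ∀ B' : List Bool, IsDyck B' →
        psi (true :: (B' ++ [false])) = true :: false :: psi B' := by
  refine ⟨psi_append_main A B C hB hAC, fun B' hB' => ?_⟩
  have h := psi_append_main [true] B' [false] hB' rfl
  simpa [psi_two] using h

end DyckBij
end

section
/- For every Dyck word D, the number of left tunnels of D plus the number of centered tunnels of D equals the number of odd rises of Ψ(D): lt(D) + ct(D) = odr(Ψ(D)). -/
attribute [local instance] Classical.propDecidable

namespace DyckBij

/-! ## auxiliary lemmas -/

def rcw (w : List Bool) : List Bool := (w.map not).reverse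

lemma rcw_rcw (w : List Bool) : rcw (rcw w) = w := by
  simp [rcw, List.map_reverse, List.map_map, Function.comp_def]

lemma length_rcw (w : List Bool) : (rcw w).length = w.length := by simp [rcw]

lemma count_map_not (w : List Bool) (b : Bool) :
    (w.map not).count b = w.count (!b) := by
  have := List.count_map_of_injective (β := Bool) w not
    (fun a b h => by cases a <;> cases b <;> simp_all) (!b)
  simpa using this

lemma count_rcw (w : List Bool) (b : Bool) : (rcw w).count b = w.count (!b) := by
  simp [rcw, List.count_reverse, count_map_not]

lemma suffix_count {w s : List Bool} (hD : IsDyck w) (hs : s <:+ w) :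
    s.count true ≤ s.count false := by
  obtain ⟨t, ht⟩ := hs
  have h1 := hD.2 t ⟨s, ht⟩
  have h2 := hD.1
  rw [← ht] at h2
  simp [List.count_append] at h2
  omega

lemma IsDyck.rc {w : List Bool} (hD : IsDyck w) : IsDyck (rcw w) := by
  constructor
  · rw [count_rcw, count_rcw]; simp [hD.1]
  · intro p hp
    obtain ⟨t, ht⟩ := hp
    have hsuf : p.reverse <:+ w.map not := by
      refine ⟨t.reverse, ?_⟩
      have := congrArg List.reverse ht
      simpa [rcw, List.reverse_append] using this
    have hsuf2 : p.reverse.map not <:+ w := by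
      have := hsuf.map not
      simpa [List.map_map, Function.comp_def] using this
    have := suffix_count hD hsuf2
    rw [count_map_not, count_map_not] at this
    simpa [List.count_reverse] using this

lemma Matched.len {w : List Bool} {i j : ℕ} (h : Matched w i j) :
    i < j ∧ j < w.length := by
  obtain ⟨A, B, C, _, hw, hA, hj⟩ := h
  have : w.length = A.length + B.length + C.length + 2 := by simp [hw]; omega
  omega

lemma Matched.getD_true {w : List Bool} {i j : ℕ} (h : Matched w i j) :
    w.getD i false = true := by
  obtain ⟨A, B, C, _, hw, hA, hj⟩ := h
  subst hA
  rw [hw, List.getD_append_right _ _ _ _ le_rfl]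
  simp

lemma Matched.getD_false {w : List Bool} {i j : ℕ} (h : Matched w i j) :
    w.getD j true = false := by
  obtain ⟨A, B, C, _, hw, hA, hj⟩ := h
  subst hA hj
  rw [hw, List.getD_append_right _ _ _ _ (by omega)]
  have : A.length + B.length + 1 - A.length = B.length + 1 := by omega
  rw [this]
  show (true :: (B ++ false :: C)).getD (B.length + 1) true = false
  rw [List.getD_cons_succ, List.getD_append_right _ _ _ _ le_rfl]
  simp

lemma Matched.rc {w : List Bool} {i j : ℕ} (h : Matched w i j) :
    Matched (rcw w) (w.length - 1 - j) (w.length - 1 - i) := by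
  obtain ⟨A, B, C, hB, hw, hA, hj⟩ := h
  have hL : w.length = A.length + B.length + C.length + 2 := by simp [hw]; omega
  refine ⟨rcw C, rcw B, rcw A, hB.rc, ?_, ?_, ?_⟩
  · rw [hw]; simp [rcw, List.reverse_append]
  · simp [length_rcw]; omega
  · simp [length_rcw]; omega

lemma dyck_core_len {B C B' C' : List Bool}
    (h : B ++ false :: C = B' ++ false :: C') (hB : IsDyck B) (hB' : IsDyck B') :
    B.length = B'.length := by
  by_contra hne
  wlog hlt : B.length < B'.length generalizing B C B' C'
  · exact this h.symm hB' hB (Ne.symm hne) (by omega)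
  have hpre1 : B ++ [false] <+: B ++ false :: C := ⟨C, by simp⟩
  have hpre2 : B' <+: B ++ false :: C := ⟨false :: C', by rw [h]⟩
  have hpre : B ++ [false] <+: B' :=
    List.prefix_of_prefix_length_le hpre1 hpre2 (by simp; omega)
  have := hB'.2 _ hpre
  simp [List.count_append] at this
  have := hB.1
  omega

lemma decomp_unique {D A B C A' B' C' : List Bool}
    (hw : D = A ++ true :: (B ++ false :: C)) (hw' : D = A' ++ true :: (B' ++ false :: C'))
    (hB : IsDyck B) (hB' : IsDyck B') (hAA : A.length = A'.length) :
    A = A' ∧ B = B' ∧ C = C' := by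
  have hA : A = A' := by
    have h1 : D.take A.length = A := by rw [hw]; exact List.take_left' rfl
    have h2 : D.take A.length = A' := by rw [hw', hAA]; exact List.take_left' rfl
    rw [← h1, h2]
  subst hA
  rw [hw] at hw'
  have h3 : B ++ false :: C = B' ++ false :: C' := by
    have := List.append_inj hw' rfl
    simpa using this.2
  have hBl : B.length = B'.length := dyck_core_len h3 hB hB'
  obtain ⟨hB1, hB2⟩ := List.append_inj h3 hBl
  exact ⟨rfl, hB1, by simpa using hB2⟩

lemma matched_unique_right {w : List Bool} {i j j' : ℕ}
    (h1 : Matched w i j) (h2 : Matched w i j') : j = j' := by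
  obtain ⟨A, B, C, hB, hw, hA, hj⟩ := h1
  obtain ⟨A', B', C', hB', hw', hA', hj'⟩ := h2
  have := decomp_unique hw hw' hB hB' (by omega)
  subst hj hj'
  rw [this.2.1]


lemma matched_unique_left {w : List Bool} {i i' j : ℕ}
    (h1 : Matched w i j) (h2 : Matched w i' j) : i = i' := by
  have l1 := h1.len
  have l2 := h2.len
  have := matched_unique_right h1.rc h2.rc
  omega

lemma matched_asymm {w : List Bool} {i j k : ℕ}
    (h1 : Matched w i j) (h2 : Matched w k i) : False := by
  have l1 := h1.len
  have e1 := h1.getD_true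
  have e2 := h2.getD_false
  rw [List.getD_eq_getElem w false (by omega)] at e1
  rw [List.getD_eq_getElem w true (by omega)] at e2
  rw [e2] at e1
  exact absurd e1 (by simp)

lemma exists_match_true {w : List Bool} {i : ℕ} (hD : IsDyck w)
    (hi : i < w.length) (h : w.getD i false = true) :
    ∃ j, Matched w i j := by
  set A := w.take i with hA
  set R := w.drop (i + 1) with hRdef
  have hwi : w[i] = true := by rwa [List.getD_eq_getElem w false hi] at h
  have hw : w = A ++ true :: R := by
    conv_lhs => rw [← List.take_append_drop i w]
    rw [List.drop_eq_getElem_cons hi, hwi]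
  have hAf : A.count false ≤ A.count true := hD.2 A (List.take_prefix _ _)
  have hcnt : A.count false + (true :: R).count false
      = A.count true + (true :: R).count true := by
    have := hD.1
    rw [hw] at this
    simpa [List.count_append] using this
  have hR : R.count true + 1 ≤ R.count false := by
    simp [List.count_cons] at hcnt; omega
  have hPex : ∃ k, (R.take k).count true < (R.take k).count false :=
    ⟨R.length, by simpa using hR⟩
  set k₀ := Nat.find hPex with hk₀def
  have hk₀ : (R.take k₀).count true < (R.take k₀).count false := Nat.find_spec hPex
  have hk₀le : k₀ ≤ R.length := Nat.find_min' hPex (by simpa using hR)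
  have hk₀pos : k₀ ≠ 0 := by
    intro h0; rw [h0] at hk₀; simp at hk₀
  obtain ⟨m, hm⟩ := Nat.exists_eq_succ_of_ne_zero hk₀pos
  have hmlt : m < R.length := by omega
  have hmmin : ∀ l, l ≤ m → ¬ ((R.take l).count true < (R.take l).count false) :=
    fun l hl => Nat.find_min hPex (by omega)
  have htake : R.take (m + 1) = R.take m ++ [R[m]] := by
    rw [List.take_succ, List.getElem?_eq_getElem hmlt]; rfl
  set B := R.take m with hBdef
  have hBle : ¬ (B.count true < B.count false) := hmmin m le_rfl
  rw [hm, htake] at hk₀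
  simp [List.count_append] at hk₀
  have hx : R[m] = false := by
    rcases Bool.eq_false_or_eq_true R[m] with hx | hx
    · rw [hx] at hk₀; simp at hk₀; omega
    · exact hx
  rw [hx] at hk₀
  simp at hk₀
  have hBeq : B.count false = B.count true := by omega
  have hBD : IsDyck B := by
    refine ⟨hBeq, fun p hp => ?_⟩
    rw [List.prefix_iff_eq_take] at hp
    rw [hp, hBdef, List.take_take]
    have := hmmin (p.length ⊓ m) (by omega)
    omega
  refine ⟨i + B.length + 1, A, B, R.drop (m + 1), hBD, ?_, ?_, rfl⟩
  · rw [hw]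
    congr 1
    congr 1
    conv_lhs => rw [← List.take_append_drop (m+1) R]
    rw [htake, hx]
    simp
  · simp [hA, hi.le]

lemma exists_match_false {w : List Bool} {j : ℕ} (hD : IsDyck w)
    (hj : j < w.length) (h : w.getD j true = false) :
    ∃ i, Matched w i j := by
  have hwj : w[j] = false := by rwa [List.getD_eq_getElem w true hj] at h
  have hlt : w.length - 1 - j < (rcw w).length := by rw [length_rcw]; omega
  have hr : (rcw w).getD (w.length - 1 - j) false = true := by
    rw [List.getD_eq_getElem _ false hlt]
    have h2 : (w.map not).length - 1 - (w.length - 1 - j) = j := by simp; omega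
    simp only [rcw, List.getElem_reverse, h2, List.getElem_map, hwj]
    rfl
  obtain ⟨j', hj'⟩ := exists_match_true hD.rc (by rw [length_rcw]; omega) hr
  have hlen := hj'.len
  rw [length_rcw] at hlen
  have := hj'.rc
  rw [rcw_rcw, length_rcw] at this
  have e1 : w.length - 1 - (w.length - 1 - j) = j := by omega
  rw [e1] at this
  exact ⟨_, this⟩

lemma length_psiR (r : ℕ) (w : List Bool) : (psiR r w).length = w.length := by
  simp [psiR]

lemma psi_getD (w : List Bool) {p : ℕ} (hp : p < w.length) :
    (psi w).getD p false =
      if ∃ p' : ℕ, p' < p ∧ MatchPair w (zigR 0 w.length p') (zigR 0 w.length p)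
      then false else true := by
  have hp' : p < (psi w).length := by rw [psi, length_psiR]; exact hp
  rw [List.getD_eq_getElem _ false hp']
  simp only [psi, psiR]
  rw [List.getElem_ofFn]

lemma zig_even (L i : ℕ) : zigR 0 L (2 * i) = i := by
  simp [zigR, Nat.mul_mod_right]

lemma zig_odd (L k : ℕ) : zigR 0 L (2 * k + 1) = L - (k + 1) := by
  have h1 : (2 * k + 1) % 2 = 1 := by omega
  have h2 : (2 * k + 1 + 1) / 2 = k + 1 := by omega
  simp [zigR, h1, h2]

lemma key (D : List Bool) (hD : IsDyck D) (i : ℕ) :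
    (∃ A B C : List Bool, IsDyck B ∧ D = A ++ true :: (B ++ false :: C) ∧
      A.length = i ∧ A.length ≤ C.length)
    ↔ (2 * i < D.length ∧ (psi D).getD (2 * i) false = true) := by
  constructor
  · rintro ⟨A, B, C, hB, hw, hA, hAC⟩
    have hL : D.length = A.length + B.length + C.length + 2 := by simp [hw]; omega
    have h2i : 2 * i < D.length := by omega
    refine ⟨h2i, ?_⟩
    rw [psi_getD D h2i, if_neg]
    rintro ⟨p', hp', hmp⟩
    rw [zig_even] at hmp
    have hM : Matched D i (i + B.length + 1) := ⟨A, B, C, hB, hw, hA, rfl⟩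
    rcases hmp with hmp | hmp
    · exact matched_asymm hM hmp
    · have ha := matched_unique_right hM hmp
      obtain ⟨m, hm | hm⟩ : ∃ m, p' = 2 * m ∨ p' = 2 * m + 1 := ⟨p' / 2, by omega⟩
      · rw [hm, zig_even] at ha
        have := hmp.len
        omega
      · rw [hm, zig_odd] at ha
        omega
  · rintro ⟨h2i, hval⟩
    rw [psi_getD D h2i] at hval
    by_cases hcond : ∃ p' : ℕ, p' < 2 * i ∧
        MatchPair D (zigR 0 D.length p') (zigR 0 D.length (2 * i))
    · rw [if_pos hcond] at hval; exact absurd hval (by simp)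
    rw [zig_even] at hcond
    push_neg at hcond
    have hiL : i < D.length := by omega
    have htrue : D.getD i false = true := by
      rcases Bool.eq_false_or_eq_true (D.getD i false) with hfb | hfb
      · exact hfb
      · exfalso
        have hfb' : D.getD i true = false := by
          rw [List.getD_eq_getElem D false hiL] at hfb
          rw [List.getD_eq_getElem D true hiL, hfb]
        obtain ⟨m, hm⟩ := exists_match_false hD hiL hfb'
        have hmlt := hm.len
        exact hcond (2 * m) (by omega) (by rw [zig_even]; exact Or.inl hm)
    obtain ⟨j, hMij⟩ := exists_match_true hD hiL htrue
    have hjl := hMij.len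
    have hjle : j + i + 1 ≤ D.length := by
      by_contra hc
      refine hcond (2 * (D.length - j - 1) + 1) (by omega) ?_
      rw [zig_odd]
      have : D.length - (D.length - j - 1 + 1) = j := by omega
      rw [this]
      exact Or.inr hMij
    obtain ⟨A, B, C, hB, hw, hA, hj⟩ := hMij
    have hL : D.length = A.length + B.length + C.length + 2 := by simp [hw]; omega
    exact ⟨A, B, C, hB, hw, hA, by omega⟩


/-- for every Dyck word `D`, `lt(D) + ct(D) = odr(Ψ(D))`. -/
theorem ltun_add_ctun_eq_oddRises_psi (D : List Bool) (hD : IsDyck D) :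
    ltun D + ctun D = oddRises (psi D) := by
  classical
  set Sl := {i : ℕ | ∃ A B C : List Bool, IsDyck B ∧ D = A ++ true :: (B ++ false :: C) ∧
    A.length = i ∧ A.length < C.length} with hSl
  set Sc := {i : ℕ | ∃ A B C : List Bool, IsDyck B ∧ D = A ++ true :: (B ++ false :: C) ∧
    A.length = i ∧ A.length = C.length + 2 * 0} with hSc
  set S := {i : ℕ | ∃ A B C : List Bool, IsDyck B ∧ D = A ++ true :: (B ++ false :: C) ∧
    A.length = i ∧ A.length ≤ C.length} with hS
  have hU : Sl ∪ Sc = S := by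
    ext i
    constructor
    · rintro (⟨A, B, C, hB, hw, hA, h⟩ | ⟨A, B, C, hB, hw, hA, h⟩)
      · exact ⟨A, B, C, hB, hw, hA, by omega⟩
      · exact ⟨A, B, C, hB, hw, hA, by omega⟩
    · rintro ⟨A, B, C, hB, hw, hA, h⟩
      rcases lt_or_eq_of_le h with h' | h'
      · exact Or.inl ⟨A, B, C, hB, hw, hA, h'⟩
      · exact Or.inr ⟨A, B, C, hB, hw, hA, by omega⟩
  have hdisj : Disjoint Sl Sc := by
    rw [Set.disjoint_left]
    rintro i ⟨A, B, C, hB, hw, hA, h⟩ ⟨A', B', C', hB', hw', hA', h'⟩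
    have := decomp_unique hw hw' hB hB' (by omega)
    have hc : C.length = C'.length := by rw [this.2.2]
    omega
  have hSsub : S ⊆ Set.Iio D.length := by
    rintro i ⟨A, B, C, hB, hw, hA, h⟩
    have : D.length = A.length + B.length + C.length + 2 := by simp [hw]; omega
    simp only [Set.mem_Iio]; omega
  have hSfin : S.Finite := (Set.finite_Iio D.length).subset hSsub
  have hSlfin : Sl.Finite := hSfin.subset (hU ▸ Set.subset_union_left)
  have hScfin : Sc.Finite := hSfin.subset (hU ▸ Set.subset_union_right)
  have h1 : ltun D = Sl.ncard := rfl
  have h2 : ctun D = Sc.ncard := rfl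
  have hsum : ltun D + ctun D = S.ncard := by
    rw [← hU, Set.ncard_union_eq hdisj hSlfin hScfin, h1, h2]
  rw [hsum]
  have himg : {p : ℕ | p < (psi D).length ∧ p % 2 = 0 ∧ (psi D).getD p false = true}
      = (fun i => 2 * i) '' S := by
    ext p
    simp only [Set.mem_setOf_eq, Set.mem_image, psi, length_psiR]
    constructor
    · rintro ⟨hpL, hpe, hpv⟩
      refine ⟨p / 2, ?_, by omega⟩
      have hp2 : p = 2 * (p / 2) := by omega
      rw [hS]
      exact (key D hD (p / 2)).mpr ⟨by omega, by rw [← hp2]; exact hpv⟩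
    · rintro ⟨i, hi, rfl⟩
      have := (key D hD i).mp hi
      exact ⟨this.1, by omega, this.2⟩
  have : oddRises (psi D) = ((fun i => 2 * i) '' S).ncard := by
    rw [oddRises, ← himg]
  rw [this, Set.ncard_image_of_injective S (fun a b h => by omega)]


end DyckBij
end
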